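/- For Erlang(k, \lambda) inter-request times, the average cost per unit time of the optimal offline policy equals 1 - (e^{-\lambda R}/k) * \sum_{m=1}^{k} \sum_{n=0}^{m-1} (\lambda R)^n / n!. -/

import Mathlib

open Finset

private lemma erlang_P_deriv (lam : ℝ) :
    ∀ (m : ℕ) (t : ℝ), HasDerivAt
      (fun t => ∑ n ∈ Finset.range (m+1), (lam*t)^n / n.factorial)
      (lam * ∑ n ∈ Finset.range m, (lam*t)^n / n.factorial) t := by
  intro m
  induction m with
  | zero =>
    intro t
    simp only [Finset.range_one, Finset.sum_singleton, pow_zero, Nat.factorial_zero,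
      Finset.range_zero, Finset.sum_empty, mul_zero]
    simpa using hasDerivAt_const t (1:ℝ)
  | succ m ih =>
    intro t
    have hpow : HasDerivAt (fun t => (lam*t)^(m+1) / ((m+1).factorial : ℝ))
        ((↑(m+1) * (lam*t)^m * lam) / ((m+1).factorial : ℝ)) t := by
      exact (((hasDerivAt_id t).const_mul lam).pow (m+1)).div_const _ |>.congr_deriv (by
        simp only [id_eq]; push_cast; ring)
    have h := (ih t).add hpow
    have key : lam * ∑ n ∈ Finset.range m, (lam*t)^n / n.factorial
        + (↑(m+1) * (lam*t)^m * lam) / ((m+1).factorial : ℝ)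
        = lam * ∑ n ∈ Finset.range (m+1), (lam*t)^n / n.factorial := by
      rw [Finset.sum_range_succ, mul_add]
      congr 1
      rw [Nat.factorial_succ]
      have hm : ((m.factorial : ℝ)) ≠ 0 := Nat.cast_ne_zero.mpr m.factorial_ne_zero
      push_cast
      field_simp
    have heq : (fun t => ∑ n ∈ Finset.range (m+1), (lam*t)^n / n.factorial
        + (lam*t)^(m+1) / ((m+1).factorial : ℝ))
        = fun t => ∑ n ∈ Finset.range (m+1+1), (lam*t)^n / n.factorial := by
      funext t; exact (Finset.sum_range_succ _ (m+1)).symm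
    rw [← key]
    exact heq ▸ h

/-- For Erlang(k, λ) inter-request times (CDF
`F t = 1 - ∑_{n=0}^{k-1} exp (-λ t) (λ t)^n / n!`, mean `k/λ`), the average
cost per unit time of the optimal offline policy,
`(λ/k) * (R - ∫_0^R F(t) dt)`, equals
`1 - (exp (-λ R)/k) * ∑_{m=1}^{k} ∑_{n=0}^{m-1} (λ R)^n / n!`. -/
theorem offline_average_cost_erlang (k : ℕ) (hk : 1 ≤ k) (lam R : ℝ)
    (hlam : 0 < lam) (hR : 0 < R) :
    (lam / k) * (R - ∫ t in (0:ℝ)..R,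
        (1 - ∑ n ∈ Finset.range k, Real.exp (-(lam * t)) * (lam * t) ^ n / n.factorial)) =
      1 - (Real.exp (-(lam * R)) / k) *
        ∑ m ∈ Finset.Icc 1 k, ∑ n ∈ Finset.range m, (lam * R) ^ n / n.factorial := by
  set P : ℕ → ℝ → ℝ := fun m t => ∑ n ∈ Finset.range m, (lam*t)^n / n.factorial with hP
  set S : ℝ → ℝ := fun t => ∑ i ∈ Finset.range k, P (i+1) t with hSdef
  set H : ℝ → ℝ := fun t => -(1/lam) * (Real.exp (-(lam*t)) * S t) with hHdef
  have hlam' : lam ≠ 0 := ne_of_gt hlam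
  -- derivative of H
  have hH : ∀ t : ℝ, HasDerivAt H
      (∑ n ∈ Finset.range k, Real.exp (-(lam * t)) * (lam * t) ^ n / n.factorial) t := by
    intro t
    have hE : HasDerivAt (fun t => Real.exp (-(lam*t))) (Real.exp (-(lam*t)) * (-(lam*1))) t :=
      (((hasDerivAt_id t).const_mul lam).neg).exp
    have hS : HasDerivAt S (∑ i ∈ Finset.range k, lam * P i t) t :=
      HasDerivAt.fun_sum (fun i _ => erlang_P_deriv lam i t)
    have h := (hE.mul hS).const_mul (-(1/lam))
    have tele : S t - ∑ i ∈ Finset.range k, P i t = P k t := by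
      rw [hSdef]
      simp only
      rw [← Finset.sum_sub_distrib]
      rw [Finset.sum_range_sub (fun i => P i t)]
      simp [hP]
    have key : -(1/lam) * (Real.exp (-(lam*t)) * (-(lam*1)) * S t
          + Real.exp (-(lam*t)) * ∑ i ∈ Finset.range k, lam * P i t)
        = ∑ n ∈ Finset.range k, Real.exp (-(lam * t)) * (lam * t) ^ n / n.factorial := by
      have : ∑ n ∈ Finset.range k, Real.exp (-(lam * t)) * (lam * t) ^ n / n.factorial
          = Real.exp (-(lam*t)) * P k t := by
        rw [hP]; simp only [Finset.mul_sum]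
        exact Finset.sum_congr rfl (fun n _ => mul_div_assoc _ _ _)
      rw [this, ← tele, ← Finset.mul_sum]
      field_simp
      ring
    exact key ▸ h
  -- continuity of the integrand's sum part
  have hcont : Continuous (fun t => ∑ n ∈ Finset.range k,
      Real.exp (-(lam * t)) * (lam * t) ^ n / n.factorial) := by
    apply continuous_finset_sum
    intro n _
    exact (((Real.continuous_exp.comp (continuous_const.mul continuous_id).neg).mul
      ((continuous_const.mul continuous_id).pow n)).div_const _)
  have hint : IntervalIntegrable (fun t => ∑ n ∈ Finset.range k,
      Real.exp (-(lam * t)) * (lam * t) ^ n / n.factorial) MeasureTheory.volume 0 R :=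
    hcont.intervalIntegrable 0 R
  -- compute the integral
  have hI : (∫ t in (0:ℝ)..R,
      (1 - ∑ n ∈ Finset.range k, Real.exp (-(lam * t)) * (lam * t) ^ n / n.factorial))
      = R - (H R - H 0) := by
    rw [intervalIntegral.integral_sub intervalIntegrable_const hint,
      intervalIntegral.integral_const, smul_eq_mul, mul_one, sub_zero]
    congr 1
    exact intervalIntegral.integral_eq_sub_of_hasDerivAt (fun t _ => hH t) hint
  rw [hI]
  -- values of H
  have hP0 : ∀ m : ℕ, 1 ≤ m → P m 0 = 1 := by
    intro m hm
    rw [hP]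
    simp only [mul_zero]
    rw [Finset.sum_eq_single 0]
    · simp
    · intro n _ hn; simp [zero_pow hn]
    · intro h; exact absurd (Finset.mem_range.mpr hm) h
  have hS0 : S 0 = k := by
    rw [hSdef]
    simp only
    rw [Finset.sum_congr rfl (fun i _ => hP0 (i+1) (Nat.le_add_left 1 i))]
    simp
  have hH0 : H 0 = -(1/lam) * k := by
    rw [hHdef]; simp [hS0]
  -- rewrite RHS sum as S R
  have hIcc : ∑ m ∈ Finset.Icc 1 k, ∑ n ∈ Finset.range m, (lam * R) ^ n / n.factorial
      = S R := by
    rw [hSdef, hP]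
    simp only
    rw [← Finset.Ico_add_one_right_eq_Icc, Finset.sum_Ico_eq_sum_range]
    exact Finset.sum_congr rfl (fun i _ => by rw [add_comm 1 i])
  rw [hIcc, hH0, hHdef]
  simp only
  have hk0 : (k : ℝ) ≠ 0 := Nat.cast_ne_zero.mpr (by omega)
  field_simp
  ring
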